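/- arXiv:1801.09203 — 2 statements merged into one kernel-verified Lean document; each statement's English description precedes it below -/
import Mathlib

section
/- Let F be the involutive monoid morphism on words over {a,b,α,β} defined by F(a)=α, F(α)=a, F(b)=β, F(β)=b. If z and p are nonempty words satisfying zp = pF(z), then there exists a nonempty word x and natural numbers i, j such that z = (F(x)x)^i and p = (F(x)x)^j F(x). -/
inductive Letter | a | b | α | β

/-- The letter involution a ↔ α, b ↔ β. -/
def swapL : Letter → Letter
  | Letter.a => Letter.α
  | Letter.α => Letter.a
  | Letter.b => Letter.β
  | Letter.β => Letter.b

/-- The involutive monoid morphism F extended letterwise to words. -/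
def F : FreeMonoid Letter →* FreeMonoid Letter := FreeMonoid.map swapL

lemma swapL_swapL (l : Letter) : swapL (swapL l) = l := by cases l <;> rfl

lemma F_F (w : FreeMonoid Letter) : F (F w) = w := by
  have h : F.comp F = MonoidHom.id (FreeMonoid Letter) :=
    FreeMonoid.hom_eq fun x => by
      show F (F (FreeMonoid.of x)) = FreeMonoid.of x
      show FreeMonoid.map swapL (FreeMonoid.map swapL (FreeMonoid.of x)) = FreeMonoid.of x
      rw [FreeMonoid.map_of, FreeMonoid.map_of, swapL_swapL]
  exact DFunLike.congr_fun h w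

lemma length_F (w : FreeMonoid Letter) : (F w).length = w.length :=
  List.length_map _

lemma F_ne_one (w : FreeMonoid Letter) (h : w ≠ 1) : F w ≠ 1 :=
  fun e => h (by rw [← F_F w, e, map_one])

lemma F_fixed (w : FreeMonoid Letter) (h : F w = w) : w = 1 := by
  have hl : (FreeMonoid.toList w).map swapL = FreeMonoid.toList w :=
    congrArg FreeMonoid.toList h
  have hnil : FreeMonoid.toList w = [] := by
    cases hw : FreeMonoid.toList w with
    | nil => rfl
    | cons c t =>
      rw [hw, List.map_cons] at hl
      injection hl with h1 _
      cases c <;> simp [swapL] at h1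
  exact FreeMonoid.toList.injective hnil

lemma pow_swap {M : Type*} [Monoid M] (a b : M) (n : ℕ) :
    (a * b) ^ n * a = a * (b * a) ^ n := by
  induction n with
  | zero => simp
  | succ n ih => rw [pow_succ, pow_succ, ← mul_assoc a, ← ih]; simp [mul_assoc]

lemma split_mul {a b c d : FreeMonoid Letter} (h : a * b = c * d) :
    (∃ q : FreeMonoid Letter, c = a * q ∧ b = q * d) ∨
    (∃ q : FreeMonoid Letter, a = c * q ∧ d = q * b) := by
  rcases List.append_eq_append_iff.mp h with ⟨q, h1, h2⟩ | ⟨q, h1, h2⟩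
  · exact Or.inl ⟨FreeMonoid.ofList q, h1, h2⟩
  · exact Or.inr ⟨FreeMonoid.ofList q, h1, h2⟩

lemma word_eq_aux : ∀ n (z p : FreeMonoid Letter), z.length + p.length ≤ n → z ≠ 1 → p ≠ 1 →
    z * p = p * F z →
    ∃ x : FreeMonoid Letter, x ≠ 1 ∧ ∃ i j : ℕ,
      z = (F x * x) ^ i ∧ p = (F x * x) ^ j * F x := by
  intro n
  induction n with
  | zero =>
    intro z p hn hz _ _
    have : z.length = 0 := by omega
    exact absurd (FreeMonoid.length_eq_zero.mp this) hz
  | succ n ih =>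
    intro z p hn hz hp h
    have hz1 : 1 ≤ z.length :=
      Nat.one_le_iff_ne_zero.mpr fun e => hz (FreeMonoid.length_eq_zero.mp e)
    have hp1 : 1 ≤ p.length :=
      Nat.one_le_iff_ne_zero.mpr fun e => hp (FreeMonoid.length_eq_zero.mp e)
    rcases split_mul h with ⟨q, hq1, hq2⟩ | ⟨s, hs1, hs2⟩
    · -- p = z * q and p = q * F z
      have hq1' : p = z * q := hq1
      have hq2' : p = q * F z := hq2
      by_cases hq : q = 1
      · subst hq
        simp only [mul_one, one_mul] at hq1' hq2'
        exact absurd (F_fixed z (hq2'.symm.trans hq1')) hz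
      · have heq : z * q = q * F z := hq1'.symm.trans hq2'
        have hlen : z.length + q.length ≤ n := by
          have e1 := congrArg FreeMonoid.length hq1'
          rw [FreeMonoid.length_mul] at e1
          omega
        obtain ⟨x, hx, i, j, hzv, hqv⟩ := ih z q hlen hz hq heq
        exact ⟨x, hx, i, i + j, hzv, by rw [hq1', hzv, hqv, pow_add, mul_assoc]⟩
    · -- z = p * s and F z = s * p
      have hs1' : z = p * s := hs1
      have hs2' : F z = s * p := hs2
      by_cases hs : s = 1
      · subst hs
        simp only [mul_one, one_mul] at hs1' hs2'
        exact absurd (F_fixed z (hs2'.trans hs1'.symm)) hz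
      · have heq2 : s * p = F p * F s := by
          have h2 := hs2'
          rw [hs1', map_mul] at h2
          exact h2.symm
        rcases split_mul heq2 with ⟨t, ht1, ht2⟩ | ⟨u, hu1, hu2⟩
        · -- F p = s * t and p = t * F s
          have ht1' : F p = s * t := ht1
          have ht2' : p = t * F s := ht2
          by_cases ht : t = 1
          · subst ht
            simp only [mul_one, one_mul] at ht1' ht2'
            refine ⟨F p, F_ne_one p hp, 1, 0, ?_, ?_⟩
            · rw [F_F, pow_one, hs1', ← ht1']
            · rw [F_F, pow_zero, one_mul]
          · have heq3 : t * F s = F s * F t := by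
              have h2 := congrArg F ht1'
              rw [F_F, map_mul] at h2
              exact ht2'.symm.trans h2
            have hFs : F s ≠ 1 := F_ne_one s hs
            have hlen : t.length + (F s).length ≤ n := by
              have e1 := congrArg FreeMonoid.length ht2'
              rw [FreeMonoid.length_mul] at e1
              have e2 := congrArg FreeMonoid.length hs1'
              rw [FreeMonoid.length_mul] at e2
              omega
            obtain ⟨x, hx, i, j, htv, hFsv⟩ := ih t (F s) hlen ht hFs heq3
            have hsv : s = x * (F x * x) ^ j := by
              have h2 := congrArg F hFsv
              rw [F_F, map_mul, map_pow, map_mul, F_F] at h2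
              rw [h2]; exact pow_swap x (F x) j
            refine ⟨x, hx, i + j + 1 + j, i + j, ?_, ?_⟩
            · rw [hs1', ht2', htv, hFsv, hsv]
              simp only [pow_add, pow_one, mul_assoc]
            · rw [ht2', htv, hFsv, pow_add, mul_assoc]
        · -- s = F p * u and F s = u * p
          have hu1' : s = F p * u := hu1
          have hu2' : F s = u * p := hu2
          by_cases hu : u = 1
          · subst hu
            simp only [mul_one, one_mul] at hu1' hu2'
            refine ⟨F p, F_ne_one p hp, 1, 0, ?_, ?_⟩
            · rw [F_F, pow_one, hs1', hu1']
            · rw [F_F, pow_zero, one_mul]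
          · have heq3 : u * p = p * F u := by
              have h2 := congrArg F hu1'
              rw [map_mul, F_F] at h2
              exact hu2'.symm.trans h2
            have hlen : u.length + p.length ≤ n := by
              have e1 := congrArg FreeMonoid.length hu1'
              rw [FreeMonoid.length_mul, length_F] at e1
              have e2 := congrArg FreeMonoid.length hs1'
              rw [FreeMonoid.length_mul] at e2
              omega
            obtain ⟨x, hx, i, j, huv, hpv⟩ := ih u p hlen hu hp heq3
            have hFp : F p = x * (F x * x) ^ j := by
              have h2 := congrArg F hpv
              rw [map_mul, map_pow, map_mul, F_F] at h2
              rw [h2]; exact pow_swap x (F x) j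
            refine ⟨x, hx, j + 1 + j + i, j, ?_, hpv⟩
            rw [hs1', hu1', hFp, hpv, huv]
            simp only [pow_add, pow_one, mul_assoc]

/-- Solutions of the word equation z p = p F(z). -/
theorem word_equation_F_two (z p : FreeMonoid Letter) (hz : z ≠ 1) (hp : p ≠ 1)
    (h : z * p = p * F z) :
    ∃ x : FreeMonoid Letter, x ≠ 1 ∧ ∃ i j : ℕ,
      z = (F x * x) ^ i ∧ p = (F x * x) ^ j * F x :=
  word_eq_aux (z.length + p.length) z p le_rfl hz hp h
end

section
/- For every natural number k, the compositions of elementary Sturmian morphisms satisfy φ_a ∘ φ_α^k ∘ φ_b = φ_b ∘ φ_β^k ∘ φ_a as morphisms on binary words. -/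
/-- φ_a : 0 ↦ 0, 1 ↦ 10. -/
def φa : Monoid.End (FreeMonoid Bool) :=
  FreeMonoid.lift fun x => if x then FreeMonoid.of true * FreeMonoid.of false else FreeMonoid.of false

/-- φ_b : 0 ↦ 0, 1 ↦ 01. -/
def φb : Monoid.End (FreeMonoid Bool) :=
  FreeMonoid.lift fun x => if x then FreeMonoid.of false * FreeMonoid.of true else FreeMonoid.of false

/-- φ_α : 0 ↦ 01, 1 ↦ 1. -/
def φα : Monoid.End (FreeMonoid Bool) :=
  FreeMonoid.lift fun x => if x then FreeMonoid.of true else FreeMonoid.of false * FreeMonoid.of true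

/-- φ_β : 0 ↦ 10, 1 ↦ 1. -/
def φβ : Monoid.End (FreeMonoid Bool) :=
  FreeMonoid.lift fun x => if x then FreeMonoid.of true else FreeMonoid.of true * FreeMonoid.of false

/-- The exchange morphism E : 0 ↦ 1, 1 ↦ 0. -/
def Eend : Monoid.End (FreeMonoid Bool) := FreeMonoid.map not

lemma endMul_apply {M : Type*} [Monoid M] (f g : Monoid.End M) (x : M) :
    (f * g) x = f (g x) := rfl

lemma swap_pow {M : Type*} [Monoid M] (x y : M) (k : ℕ) :
    x * (y * x) ^ k = (x * y) ^ k * x := by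
  induction k with
  | zero => simp
  | succ n ih =>
    rw [pow_succ, pow_succ, ← mul_assoc, ih, mul_assoc, mul_assoc, mul_assoc]

lemma φa_true : φa (.of true) = .of true * .of false := rfl
lemma φa_false : φa (.of false) = .of false := rfl
lemma φb_true : φb (.of true) = .of false * .of true := rfl
lemma φb_false : φb (.of false) = .of false := rfl
lemma φα_true : φα (.of true) = .of true := rfl
lemma φα_false : φα (.of false) = .of false * .of true := rfl
lemma φβ_true : φβ (.of true) = .of true := rfl
lemma φβ_false : φβ (.of false) = .of true * .of false := rfl

lemma φα_pow_true (k : ℕ) : (φα ^ k) (.of true) = .of true := by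
  induction k with
  | zero => rfl
  | succ n ih => rw [pow_succ', endMul_apply, ih, φα_true]

lemma φα_pow_false (k : ℕ) :
    (φα ^ k) (.of false) = .of false * (.of true) ^ k := by
  induction k with
  | zero => simp
  | succ n ih =>
    rw [pow_succ', endMul_apply, ih, map_mul, map_pow, φα_false, φα_true, pow_succ',
      mul_assoc]

lemma φβ_pow_true (k : ℕ) : (φβ ^ k) (.of true) = .of true := by
  induction k with
  | zero => rfl
  | succ n ih => rw [pow_succ', endMul_apply, ih, φβ_true]

lemma φβ_pow_false (k : ℕ) :
    (φβ ^ k) (.of false) = (.of true) ^ k * .of false := by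
  induction k with
  | zero => simp
  | succ n ih =>
    rw [pow_succ', endMul_apply, ih, map_mul, map_pow, φβ_false, φβ_true, pow_succ',
      ← mul_assoc, pow_mul_comm', mul_assoc]

/-- φ_a ∘ φ_α^k ∘ φ_b = φ_b ∘ φ_β^k ∘ φ_a (multiplication in `Monoid.End` is composition). -/
theorem sturmian_relation_latin (k : ℕ) : φa * φα ^ k * φb = φb * φβ ^ k * φa := by
  apply FreeMonoid.hom_eq
  intro a
  change (φa * φα ^ k * φb : Monoid.End (FreeMonoid Bool)) (FreeMonoid.of a) =
    (φb * φβ ^ k * φa : Monoid.End (FreeMonoid Bool)) (FreeMonoid.of a)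
  rw [endMul_apply, endMul_apply, endMul_apply, endMul_apply]
  cases a
  · simp only [φb_false, φa_false, φα_pow_false, φβ_pow_false, map_mul, map_pow,
      φa_true, φb_true]
    exact swap_pow _ _ k
  · simp only [φb_true, φa_true, map_mul, map_pow, φα_pow_false, φα_pow_true,
      φβ_pow_true, φβ_pow_false, φa_false, φb_false]
    rw [mul_assoc, ← pow_succ, ← mul_assoc, ← pow_succ']
    exact swap_pow _ _ (k + 1)
end
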